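/- Let o be the ring of integers of a non-archimedean local field F with residue cardinality q, uniformizer ϖ, and let n ≥ 1, l < n be non-negative integers. Then N_∞(r; n, l) := |{α ∈ o/ϖ^n o : α(α + ϖ^r) ∈ ϖ^{n+r−l} o}| equals 2q^l for 0 ≤ r < n − l, and equals q^{⌊(n+l−r)/2⌋} for n − l ≤ r ≤ l. -/

import Mathlib

section Aux

variable {o : Type*} [CommRing o] [IsDomain o] [IsDiscreteValuationRing o] {ϖ : o}

lemma aux_pow_dvd_pow_iff (hϖ : Irreducible ϖ) {i j : ℕ} : ϖ ^ i ∣ ϖ ^ j ↔ i ≤ j :=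
  pow_dvd_pow_iff hϖ.ne_zero hϖ.not_isUnit

/-- The set of elements of `o⧸ϖ^n` divisible by `ϖ^k` is in bijection with `o⧸ϖ^(n-k)`. -/
lemma aux_equiv_sub (hϖ : Irreducible ϖ) {k n : ℕ} (hkn : k ≤ n) :
    Nonempty ((o ⧸ Ideal.span {ϖ ^ (n - k)}) ≃
      {x : o ⧸ Ideal.span {ϖ ^ n} //
        ∃ a, Ideal.Quotient.mk (Ideal.span {ϖ ^ n}) a = x ∧ ϖ ^ k ∣ a}) := by
  have hpow : ϖ ^ k * ϖ ^ (n - k) = ϖ ^ n := by rw [← pow_add]; congr 1; omega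
  have hle : Ideal.span {ϖ ^ (n - k)} ≤
      Submodule.comap (LinearMap.mulLeft o (ϖ ^ k)) (Ideal.span {ϖ ^ n}) := by
    intro x hx
    rw [Ideal.mem_span_singleton] at hx
    rw [Submodule.mem_comap, LinearMap.mulLeft_apply, Ideal.mem_span_singleton, ← hpow]
    exact mul_dvd_mul_left _ hx
  set F := Submodule.mapQ (Ideal.span {ϖ ^ (n - k)}) (Ideal.span {ϖ ^ n})
      (LinearMap.mulLeft o (ϖ ^ k)) hle with hFdef
  have hF : ∀ b : o, F (Ideal.Quotient.mk _ b) = Ideal.Quotient.mk _ (ϖ ^ k * b) := by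
    intro b
    rw [hFdef, ← Ideal.Quotient.mk_eq_mk, ← Ideal.Quotient.mk_eq_mk, Submodule.mapQ_apply,
      LinearMap.mulLeft_apply]
  have hprop : ∀ x, ∃ a, Ideal.Quotient.mk (Ideal.span {ϖ ^ n}) a = F x ∧ ϖ ^ k ∣ a := by
    intro x
    obtain ⟨b, rfl⟩ := Ideal.Quotient.mk_surjective x
    exact ⟨ϖ ^ k * b, (hF b).symm, dvd_mul_right _ _⟩
  refine ⟨Equiv.ofBijective (fun x => ⟨F x, hprop x⟩) ⟨?_, ?_⟩⟩
  · intro x y h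
    rw [Subtype.ext_iff] at h
    obtain ⟨b, rfl⟩ := Ideal.Quotient.mk_surjective x
    obtain ⟨c, rfl⟩ := Ideal.Quotient.mk_surjective y
    simp only [hF] at h
    rw [Ideal.Quotient.eq, Ideal.mem_span_singleton] at h ⊢
    rw [← mul_sub, ← hpow] at h
    exact (mul_dvd_mul_iff_left (pow_ne_zero k hϖ.ne_zero)).mp h
  · rintro ⟨x, a, hax, c, rfl⟩
    exact ⟨Ideal.Quotient.mk _ c, Subtype.ext ((hF c).trans hax)⟩

lemma aux_card_quot_pow (hϖ : Irreducible ϖ) {q : ℕ}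
    (hq : Nat.card (o ⧸ Ideal.span {ϖ}) = q) (j : ℕ) :
    Nat.card (o ⧸ Ideal.span {ϖ ^ j}) = q ^ j := by
  induction j with
  | zero =>
    rw [pow_zero, Ideal.span_singleton_one, pow_zero]
    have : Subsingleton (o ⧸ (⊤ : Ideal o)) := Ideal.Quotient.subsingleton_iff.mpr rfl
    exact Nat.card_eq_one_iff_unique.mpr ⟨⟨fun a b => Subsingleton.elim a b⟩, ⟨0⟩⟩
  | succ j ih =>
    have hle : Ideal.span {ϖ ^ (j + 1)} ≤ Ideal.span {ϖ ^ j} :=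
      Ideal.span_singleton_le_span_singleton.mpr (pow_dvd_pow ϖ (by omega))
    set f : o ⧸ Ideal.span {ϖ ^ (j + 1)} →+* o ⧸ Ideal.span {ϖ ^ j} :=
      Ideal.Quotient.factor hle with hfdef
    have hfmk : ∀ b : o, f (Ideal.Quotient.mk _ b) = Ideal.Quotient.mk _ b := by
      intro b; rw [hfdef]; exact Ideal.Quotient.factor_mk hle b
    set φ : (o ⧸ Ideal.span {ϖ ^ (j + 1)}) →+ (o ⧸ Ideal.span {ϖ ^ j}) := f.toAddMonoidHom
      with hφdef
    have hsurj : Function.Surjective φ := by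
      intro x
      obtain ⟨b, rfl⟩ := Ideal.Quotient.mk_surjective x
      exact ⟨Ideal.Quotient.mk _ b, hfmk b⟩
    have hlag : Nat.card (o ⧸ Ideal.span {ϖ ^ (j + 1)}) =
        Nat.card ((o ⧸ Ideal.span {ϖ ^ (j + 1)}) ⧸ φ.ker) * Nat.card φ.ker :=
      AddSubgroup.card_eq_card_quotient_mul_card_addSubgroup φ.ker
    have hquot : Nat.card ((o ⧸ Ideal.span {ϖ ^ (j + 1)}) ⧸ φ.ker) =
        Nat.card (o ⧸ Ideal.span {ϖ ^ j}) :=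
      Nat.card_congr (QuotientAddGroup.quotientKerEquivOfSurjective φ hsurj).toEquiv
    have hkermem : ∀ x : o ⧸ Ideal.span {ϖ ^ (j + 1)},
        x ∈ φ.ker ↔ ∃ a, Ideal.Quotient.mk (Ideal.span {ϖ ^ (j + 1)}) a = x ∧ ϖ ^ j ∣ a := by
      intro x
      obtain ⟨b, rfl⟩ := Ideal.Quotient.mk_surjective x
      rw [AddMonoidHom.mem_ker]
      constructor
      · intro h
        have : f (Ideal.Quotient.mk _ b) = 0 := h
        rw [hfmk] at this
        rw [Ideal.Quotient.eq_zero_iff_mem, Ideal.mem_span_singleton] at this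
        exact ⟨b, rfl, this⟩
      · rintro ⟨a, ha, hda⟩
        rw [← ha]
        show f (Ideal.Quotient.mk (Ideal.span {ϖ ^ (j + 1)}) a) = 0
        rw [hfmk a, Ideal.Quotient.eq_zero_iff_mem, Ideal.mem_span_singleton]
        exact hda
    have hker : Nat.card φ.ker = q := by
      have e1 := Nat.card_congr (Equiv.subtypeEquivRight hkermem)
      have e2 := Nat.card_congr (aux_equiv_sub hϖ (show j ≤ j + 1 by omega)).some
      have h1 : j + 1 - j = 1 := by omega
      rw [h1, pow_one] at e2
      rw [e1, ← e2, hq]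
    rw [hlag, hquot, ih, hker, pow_succ]

lemma aux_card_sub (hϖ : Irreducible ϖ) {q : ℕ}
    (hq : Nat.card (o ⧸ Ideal.span {ϖ}) = q) {k n : ℕ} (hkn : k ≤ n) :
    Nat.card {x : o ⧸ Ideal.span {ϖ ^ n} //
      ∃ a, Ideal.Quotient.mk (Ideal.span {ϖ ^ n}) a = x ∧ ϖ ^ k ∣ a} = q ^ (n - k) := by
  rw [← Nat.card_congr (aux_equiv_sub hϖ hkn).some]
  exact aux_card_quot_pow hϖ hq (n - k)

/-- Characterization in the range `r + l < n`. -/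
lemma aux_caseA (hϖ : Irreducible ϖ) {n l r : ℕ} (hl : l < n) (h1 : r + l < n) (a : o) :
    ϖ ^ (n + r - l) ∣ a * (a + ϖ ^ r) ↔ ϖ ^ (n - l) ∣ a ∨ ϖ ^ (n - l) ∣ a + ϖ ^ r := by
  constructor
  · intro h
    by_contra hc
    push_neg at hc
    obtain ⟨hA, hB⟩ := hc
    have ha0 : a ≠ 0 := fun h0 => hA (h0 ▸ dvd_zero _)
    have hb0 : a + ϖ ^ r ≠ 0 := fun h0 => hB (h0 ▸ dvd_zero _)
    obtain ⟨i, u, hu⟩ := IsDiscreteValuationRing.eq_unit_mul_pow_irreducible ha0 hϖ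
    obtain ⟨j, v, hv⟩ := IsDiscreteValuationRing.eq_unit_mul_pow_irreducible hb0 hϖ
    have hi : i < n - l := by
      by_contra hi
      push_neg at hi
      exact hA (hu ▸ (pow_dvd_pow ϖ hi).mul_left _)
    have hj : j < n - l := by
      by_contra hj
      push_neg at hj
      exact hB (hv ▸ (pow_dvd_pow ϖ hj).mul_left _)
    have d1 : ϖ ^ min i j ∣ a := hu ▸ (pow_dvd_pow ϖ (min_le_left _ _)).mul_left _
    have d2 : ϖ ^ min i j ∣ a + ϖ ^ r := hv ▸ (pow_dvd_pow ϖ (min_le_right _ _)).mul_left _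
    have hmin : min i j ≤ r := by
      have : ϖ ^ min i j ∣ ϖ ^ r := by
        have := d2.sub d1
        rwa [add_sub_cancel_left] at this
      exact (aux_pow_dvd_pow_iff hϖ).mp this
    have hij : n + r - l ≤ i + j := by
      have hkey : a * (a + ϖ ^ r) = (↑u * ↑v : o) * ϖ ^ (i + j) := by
        rw [hv, hu, pow_add]; ring
      rw [hkey] at h
      have hu' : IsUnit (↑u * ↑v : o) := (u.isUnit).mul (v.isUnit)
      rw [hu'.dvd_mul_left] at h
      exact (aux_pow_dvd_pow_iff hϖ).mp h
    rcases min_choice i j with hm | hm <;> omega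
  · intro hor
    have heq : n - l + r = n + r - l := by omega
    rcases hor with hA | hB
    · have h2 : ϖ ^ r ∣ a + ϖ ^ r :=
        ((pow_dvd_pow ϖ (show r ≤ n - l by omega)).trans hA).add dvd_rfl
      have := mul_dvd_mul hA h2
      rwa [← pow_add, heq] at this
    · have h2 : ϖ ^ r ∣ a := by
        have : ϖ ^ r ∣ a + ϖ ^ r := (pow_dvd_pow ϖ (show r ≤ n - l by omega)).trans hB
        have := this.sub dvd_rfl
        rwa [add_sub_cancel_right] at this
      have := mul_dvd_mul h2 hB
      rwa [← pow_add, add_comm r (n - l), heq] at this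

/-- Characterization in the range `n ≤ r + l`. -/
lemma aux_caseB (hϖ : Irreducible ϖ) {n l r : ℕ} (hl : l < n) (hr : r ≤ l) (h2 : n ≤ r + l)
    (a : o) :
    ϖ ^ (n + r - l) ∣ a * (a + ϖ ^ r) ↔ ϖ ^ ((n + r - l + 1) / 2) ∣ a := by
  set k := (n + r - l + 1) / 2 with hkdef
  have hkr : k ≤ r := by omega
  have hk1 : 1 ≤ k := by omega
  constructor
  · intro h
    by_contra hA
    have ha0 : a ≠ 0 := fun h0 => hA (h0 ▸ dvd_zero _)
    obtain ⟨i, u, hu⟩ := IsDiscreteValuationRing.eq_unit_mul_pow_irreducible ha0 hϖ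
    have hik : i < k := by
      by_contra hi
      push_neg at hi
      exact hA (hu ▸ (pow_dvd_pow ϖ hi).mul_left _)
    have hir : i < r := lt_of_lt_of_le hik hkr
    obtain ⟨s, hs1, hs2⟩ : ∃ s, r = i + s ∧ 1 ≤ s := ⟨r - i, by omega, by omega⟩
    have hkey : a * (a + ϖ ^ r) = ϖ ^ (2 * i) * ((↑u : o) * (↑u + ϖ ^ s)) := by
      rw [hu, hs1, pow_add, two_mul, pow_add]; ring
    have hdvd : ϖ ^ (2 * i) * ϖ ∣ ϖ ^ (2 * i) * ((↑u : o) * (↑u + ϖ ^ s)) := by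
      rw [← hkey, ← pow_succ]
      exact (pow_dvd_pow ϖ (by omega)).trans h
    have hpc : ϖ ∣ (↑u : o) * (↑u + ϖ ^ s) :=
      (mul_dvd_mul_iff_left (pow_ne_zero (2 * i) hϖ.ne_zero)).mp hdvd
    have hprime : Prime ϖ := UniqueFactorizationMonoid.irreducible_iff_prime.mp hϖ
    rcases hprime.2.2 _ _ hpc with hd | hd
    · exact hϖ.not_isUnit (isUnit_of_dvd_unit hd u.isUnit)
    · have : ϖ ∣ (↑u : o) := by
        have hp : ϖ ∣ ϖ ^ s := dvd_pow_self ϖ (by omega)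
        have := hd.sub hp
        rwa [add_sub_cancel_right] at this
      exact hϖ.not_isUnit (isUnit_of_dvd_unit this u.isUnit)
  · intro hA
    have h1 : ϖ ^ k ∣ a + ϖ ^ r := hA.add (pow_dvd_pow ϖ hkr)
    have := mul_dvd_mul hA h1
    rw [← pow_add] at this
    exact (pow_dvd_pow ϖ (show n + r - l ≤ k + k by omega)).trans this

end Aux

/-- Counting `N_∞(r; n, l) = |{α ∈ o/ϖ^n : α(α+ϖ^r) ∈ ϖ^{n+r-l} o}|` in the case `l < n`:
it equals `2q^l` for `0 ≤ r < n - l` and `q^{⌊(n+l-r)/2⌋}` for `n - l ≤ r ≤ l`. -/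
theorem stmt_5 (o : Type*) [CommRing o] [IsDomain o] [IsDiscreteValuationRing o]
    (ϖ : o) (hϖ : Irreducible ϖ) (q : ℕ) (hq0 : 0 < q)
    (hq : Nat.card (o ⧸ Ideal.span {ϖ}) = q)
    (n l r : ℕ) (hn : 1 ≤ n) (hl : l < n) (hr : r ≤ l) :
    (r + l < n →
      Nat.card {α : o ⧸ Ideal.span {ϖ ^ n} //
        ∃ a : o, Ideal.Quotient.mk (Ideal.span {ϖ ^ n}) a = α ∧
          a * (a + ϖ ^ r) ∈ Ideal.span {ϖ ^ (n + r - l)}} = 2 * q ^ l) ∧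
    (n ≤ r + l →
      Nat.card {α : o ⧸ Ideal.span {ϖ ^ n} //
        ∃ a : o, Ideal.Quotient.mk (Ideal.span {ϖ ^ n}) a = α ∧
          a * (a + ϖ ^ r) ∈ Ideal.span {ϖ ^ (n + r - l)}} = q ^ ((n + l - r) / 2)) := by
  have hfin : Finite (o ⧸ Ideal.span {ϖ ^ n}) := by
    apply Nat.finite_of_card_ne_zero
    rw [aux_card_quot_pow hϖ hq n]
    positivity
  constructor
  · intro h1
    set S₁ : Set (o ⧸ Ideal.span {ϖ ^ n}) :=
      {x | ∃ a, Ideal.Quotient.mk (Ideal.span {ϖ ^ n}) a = x ∧ ϖ ^ (n - l) ∣ a} with hS₁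
    set S₂ : Set (o ⧸ Ideal.span {ϖ ^ n}) :=
      {x | ∃ a, Ideal.Quotient.mk (Ideal.span {ϖ ^ n}) a = x ∧ ϖ ^ (n - l) ∣ a + ϖ ^ r} with hS₂
    have hmem : ∀ x : o ⧸ Ideal.span {ϖ ^ n},
        (∃ a : o, Ideal.Quotient.mk (Ideal.span {ϖ ^ n}) a = x ∧
          a * (a + ϖ ^ r) ∈ Ideal.span {ϖ ^ (n + r - l)}) ↔ x ∈ S₁ ∪ S₂ := by
      intro x
      simp only [hS₁, hS₂, Set.mem_union, Set.mem_setOf_eq, Ideal.mem_span_singleton]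
      constructor
      · rintro ⟨a, rfl, h⟩
        rcases (aux_caseA hϖ hl h1 a).mp h with h' | h'
        · exact Or.inl ⟨a, rfl, h'⟩
        · exact Or.inr ⟨a, rfl, h'⟩
      · rintro (⟨a, rfl, h⟩ | ⟨a, rfl, h⟩)
        · exact ⟨a, rfl, (aux_caseA hϖ hl h1 a).mpr (Or.inl h)⟩
        · exact ⟨a, rfl, (aux_caseA hϖ hl h1 a).mpr (Or.inr h)⟩
    have hdisj : Disjoint S₁ S₂ := by
      rw [Set.disjoint_left]
      rintro x ⟨a, rfl, hda⟩ ⟨b, hb, hdb⟩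
      have hsub : ϖ ^ n ∣ b - a := by
        rw [Ideal.Quotient.eq, Ideal.mem_span_singleton] at hb
        exact hb
      have h3 : ϖ ^ (n - l) ∣ b - a := (pow_dvd_pow ϖ (by omega)).trans hsub
      have h4 : ϖ ^ (n - l) ∣ b := by
        have := h3.add hda
        rwa [sub_add_cancel] at this
      have h5 : ϖ ^ (n - l) ∣ ϖ ^ r := by
        have := hdb.sub h4
        rwa [add_sub_cancel_left] at this
      have := (aux_pow_dvd_pow_iff hϖ).mp h5
      omega
    have hcard1 : Nat.card S₁ = q ^ l := by
      have := aux_card_sub hϖ hq (show n - l ≤ n by omega)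
      have hnl : n - (n - l) = l := by omega
      rw [hnl] at this
      exact this
    have hcard2 : Nat.card S₂ = q ^ l := by
      rw [← hcard1]
      apply Nat.card_congr
      refine ⟨fun x => ⟨x.1 + Ideal.Quotient.mk _ (ϖ ^ r), ?_⟩,
        fun x => ⟨x.1 - Ideal.Quotient.mk _ (ϖ ^ r), ?_⟩, ?_, ?_⟩
      · obtain ⟨a, ha, hd⟩ := x.2
        exact ⟨a + ϖ ^ r, by rw [map_add, ha], hd⟩
      · obtain ⟨a, ha, hd⟩ := x.2
        exact ⟨a - ϖ ^ r, by rw [map_sub, ha], by simpa using hd⟩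
      · intro x; ext; simp
      · intro x; ext; simp
    have hstep : Nat.card {α : o ⧸ Ideal.span {ϖ ^ n} //
        ∃ a : o, Ideal.Quotient.mk (Ideal.span {ϖ ^ n}) a = α ∧
          a * (a + ϖ ^ r) ∈ Ideal.span {ϖ ^ (n + r - l)}} = Nat.card ↥(S₁ ∪ S₂) :=
      Nat.card_congr (Equiv.subtypeEquivRight hmem)
    rw [hstep, Nat.card_coe_set_eq, Set.ncard_union_eq hdisj (Set.toFinite _)
      (Set.toFinite _), ← Nat.card_coe_set_eq, ← Nat.card_coe_set_eq,
      hcard1, hcard2]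
    ring
  · intro h2
    set k := (n + r - l + 1) / 2 with hkdef
    have hkn : k ≤ n := by omega
    have hmem : ∀ x : o ⧸ Ideal.span {ϖ ^ n},
        (∃ a : o, Ideal.Quotient.mk (Ideal.span {ϖ ^ n}) a = x ∧
          a * (a + ϖ ^ r) ∈ Ideal.span {ϖ ^ (n + r - l)}) ↔
        (∃ a : o, Ideal.Quotient.mk (Ideal.span {ϖ ^ n}) a = x ∧ ϖ ^ k ∣ a) := by
      intro x
      simp only [Ideal.mem_span_singleton]
      constructor
      · rintro ⟨a, rfl, h⟩
        exact ⟨a, rfl, (aux_caseB hϖ hl hr h2 a).mp h⟩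
      · rintro ⟨a, rfl, h⟩
        exact ⟨a, rfl, (aux_caseB hϖ hl hr h2 a).mpr h⟩
    rw [Nat.card_congr (Equiv.subtypeEquivRight hmem), aux_card_sub hϖ hq hkn]
    congr 1
    omega
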